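/- Assume Cramér's conjecture: p_{n+1} - p_n = O(log² p_n). Assume also Littlewood's oscillation theorem: there exist C > 0 and infinitely many n with θ(p_n) > p_n + C√(p_n) · log log log p_n. Then the inequality u_n > u_{n+1} for u_n = N_n / (φ(N_n) · log log N_n) is violated for infinitely many n. -/

import Mathlib

open Filter Topology Finset Real

/-- the k-th prime (1-indexed): `prim 1 = 2`. -/
noncomputable def prim (k : ℕ) : ℕ := Nat.nth Nat.Prime (k - 1)

/-- the primorial of order `n`: the product of the first `n` primes. -/
noncomputable def primorialN (n : ℕ) : ℕ := ∏ k ∈ Finset.Icc 1 n, prim k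

/-- Chebyshev's first summatory function `θ(x) = ∑_{p ≤ x} log p`. -/
noncomputable def cheb (x : ℝ) : ℝ :=
  ∑ q ∈ Finset.filter Nat.Prime (Finset.Iic ⌊x⌋₊), Real.log q

/-- the Nicolas ratio `u n = N_n / (φ(N_n) log log N_n)`. -/
noncomputable def u (n : ℕ) : ℝ :=
  (primorialN n : ℝ) / (Nat.totient (primorialN n) * Real.log (Real.log (primorialN n)))

/-- the Dedekind `Ψ` function (real-valued). -/
noncomputable def psi (n : ℕ) : ℝ := n * ∏ p ∈ n.primeFactors, (1 + 1 / (p : ℝ))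

/-- the ratio `v n = Ψ(N_n)/(N_n log log N_n)`. -/
noncomputable def v (n : ℕ) : ℝ :=
  psi (primorialN n) / (primorialN n * Real.log (Real.log (primorialN n)))

namespace Stmt6Aux

noncomputable def q (i : ℕ) : ℕ := Nat.nth Nat.Prime i

lemma hqinf : {n | Nat.Prime n}.Infinite := Nat.infinite_setOf_prime

lemma q_prime (i : ℕ) : (q i).Prime := Nat.nth_mem_of_infinite hqinf i

lemma q_strictMono : StrictMono q := Nat.nth_strictMono hqinf

lemma prim_succ (n : ℕ) : prim (n + 1) = q n := by simp [prim, q]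

lemma primorial_succ (n : ℕ) : primorialN (n + 1) = primorialN n * q n := by
  unfold primorialN
  rw [Finset.prod_Icc_succ_top (by omega : 1 ≤ n + 1), prim_succ]

lemma primorial_eq_prod_range (n : ℕ) : primorialN n = ∏ i ∈ Finset.range n, q i := by
  induction n with
  | zero => simp [primorialN]
  | succ n ih => rw [primorial_succ, Finset.prod_range_succ, ih]

lemma primorial_pos (n : ℕ) : 0 < primorialN n := by
  rw [primorial_eq_prod_range]; exact Finset.prod_pos fun i _ => (q_prime i).pos

lemma coprime_q (n : ℕ) : Nat.Coprime (primorialN n) (q n) := by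
  rw [primorial_eq_prod_range]
  apply Nat.Coprime.prod_left
  intro i hi
  exact (Nat.coprime_primes (q_prime i) (q_prime n)).2
    (q_strictMono (Finset.mem_range.1 hi)).ne

lemma totient_succ (n : ℕ) :
    (primorialN (n + 1)).totient = (primorialN n).totient * (q n - 1) := by
  rw [primorial_succ, Nat.totient_mul (coprime_q n), Nat.totient_prime (q_prime n)]

lemma filter_primes_Iic (m : ℕ) :
    Finset.filter Nat.Prime (Finset.Iic (q m)) = (Finset.range (m + 1)).image q := by
  ext r
  simp only [Finset.mem_filter, Finset.mem_Iic, Finset.mem_image, Finset.mem_range]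
  constructor
  · rintro ⟨hle, hp⟩
    refine ⟨Nat.count Nat.Prime r, ?_, Nat.nth_count hp⟩
    have h1 : q (Nat.count Nat.Prime r) ≤ q m := by
      unfold q; rw [Nat.nth_count hp]; exact hle
    have := q_strictMono.le_iff_le.mp h1
    omega
  · rintro ⟨i, hi, rfl⟩
    exact ⟨q_strictMono.monotone (by omega), q_prime i⟩

lemma cheb_prim (n : ℕ) (hn : 1 ≤ n) :
    cheb (prim n) = Real.log (primorialN n) := by
  obtain ⟨m, rfl⟩ : ∃ m, n = m + 1 := ⟨n - 1, by omega⟩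
  unfold cheb
  rw [prim_succ, Nat.floor_natCast, filter_primes_Iic,
    Finset.sum_image (fun a _ b _ h => q_strictMono.injective h),
    primorial_eq_prod_range, Nat.cast_prod,
    Real.log_prod (fun i _ => by exact_mod_cast (q_prime i).pos.ne')]

lemma log_add_le (x y : ℝ) (hx : 0 < x) (hy : 0 ≤ y) :
    Real.log (x + y) ≤ Real.log x + y / x := by
  have h := Real.log_le_sub_one_of_pos (show 0 < (x + y) / x by positivity)
  rw [Real.log_div (by positivity) hx.ne'] at h
  have h2 : (x + y) / x - 1 = y / x := by field_simp; ring
  linarith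

lemma one_le_log {x : ℝ} (hx : 3 ≤ x) : 1 ≤ Real.log x := by
  rw [Real.le_log_iff_exp_le (by linarith)]
  have := Real.exp_one_lt_d9
  linarith

set_option maxHeartbeats 1000000 in
/-- The analytic core inequality. -/
lemma key (x p T C D : ℝ) (hC : 0 < C) (hD : 1 ≤ D)
    (hx3 : 3 ≤ x) (hlll : 1 ≤ Real.log (Real.log (Real.log x)))
    (hlog2 : (Real.log x) ^ 2 ≤ C / (3 * D) * Real.sqrt x)
    (hlog1 : D * Real.log x ≤ x)
    (hT : x + C * Real.sqrt x * Real.log (Real.log (Real.log x)) < T)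
    (hp : p - x ≤ D * (Real.log x) ^ 2)
    (hpx : x + 1 ≤ p) :
    (p - 1) * Real.log (T + Real.log p) ≤ p * Real.log T := by
  have hD0 : (0 : ℝ) < D := by linarith
  set L := Real.log x with hLdef
  set lll := Real.log (Real.log L) with hllldef
  have hL1 : 1 ≤ L := one_le_log hx3
  have hsx : 0 ≤ Real.sqrt x := Real.sqrt_nonneg x
  have hx0 : (0 : ℝ) < x := by linarith
  have hClllsx : 0 ≤ C * Real.sqrt x * lll :=
    mul_nonneg (mul_nonneg hC.le hsx) (by linarith)
  have hTx : x < T := by linarith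
  have hT3 : 3 ≤ T := by linarith
  have hp4 : 4 ≤ p := by linarith
  have hlogp0 : 0 < Real.log p := by
    have := one_le_log (show (3:ℝ) ≤ p by linarith); linarith
  have hlogT1 : 1 ≤ Real.log T := one_le_log hT3
  have hLT : L ≤ Real.log T := Real.log_le_log hx0 hTx.le
  -- bound on log p
  have hpB : p ≤ x + D * L ^ 2 := by linarith
  have hlogp : Real.log p ≤ L + D * L ^ 2 / x := by
    have h1 : Real.log p ≤ Real.log (x + D * L ^ 2) :=
      Real.log_le_log (by linarith) hpB
    have h2 := log_add_le x (D * L ^ 2) hx0 (by positivity)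
    linarith
  -- Step A : (p-1) log p ≤ T log T
  have hstepA : (p - 1) * Real.log p ≤ T * Real.log T := by
    have h1 : (p - 1) * Real.log p ≤ p * Real.log p := by nlinarith [hlogp0.le]
    have h2 : p * Real.log p ≤ (x + D * L ^ 2) * (L + D * L ^ 2 / x) :=
      mul_le_mul hpB hlogp hlogp0.le (by positivity)
    have h3 : (x + D * L ^ 2) * (L + D * L ^ 2 / x)
        = x * L + D * L ^ 2 + D * L ^ 3 + (D * L ^ 3) * (D * L / x) := by
      field_simp; ring
    have hDLx : D * L / x ≤ 1 := by rw [div_le_one hx0]; exact hlog1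
    have hDL3 : 0 ≤ D * L ^ 3 := by positivity
    have hL23 : L ^ 2 ≤ L ^ 3 := pow_le_pow_right₀ hL1 (by norm_num)
    have h4a : (D * L ^ 3) * (D * L / x) ≤ D * L ^ 3 :=
      mul_le_of_le_one_right hDL3 hDLx
    have h4b : D * L ^ 2 ≤ D * L ^ 3 := by nlinarith
    have h4 : (x + D * L ^ 2) * (L + D * L ^ 2 / x) ≤ x * L + 3 * (D * L ^ 3) := by
      rw [h3]; linarith
    have h5a : 3 * D * L ^ 2 * L ≤ 3 * D * (C / (3 * D) * Real.sqrt x) * L :=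
      mul_le_mul_of_nonneg_right
        (mul_le_mul_of_nonneg_left hlog2 (by positivity)) (by linarith)
    have h5b : 3 * D * (C / (3 * D) * Real.sqrt x) * L = C * Real.sqrt x * L := by
      field_simp
    have h5 : 3 * (D * L ^ 3) ≤ C * Real.sqrt x * L := by
      calc 3 * (D * L ^ 3) = 3 * D * L ^ 2 * L := by ring
        _ ≤ 3 * D * (C / (3 * D) * Real.sqrt x) * L := h5a
        _ = C * Real.sqrt x * L := h5b
    have h6 : C * Real.sqrt x * L ≤ C * Real.sqrt x * lll * L := by
      nlinarith [mul_nonneg (mul_nonneg (mul_nonneg hC.le hsx)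
        (show (0:ℝ) ≤ L by linarith)) (show (0:ℝ) ≤ lll - 1 by linarith)]
    have h7a : (x + C * Real.sqrt x * lll) * L ≤ T * L :=
      mul_le_mul_of_nonneg_right hT.le (by linarith)
    have h7b : T * L ≤ T * Real.log T :=
      mul_le_mul_of_nonneg_left hLT (by linarith)
    calc (p - 1) * Real.log p ≤ p * Real.log p := h1
      _ ≤ (x + D * L ^ 2) * (L + D * L ^ 2 / x) := h2
      _ ≤ x * L + 3 * (D * L ^ 3) := h4
      _ ≤ x * L + C * Real.sqrt x * L := by linarith
      _ ≤ x * L + C * Real.sqrt x * lll * L := by linarith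
      _ = (x + C * Real.sqrt x * lll) * L := by ring
      _ ≤ T * L := h7a
      _ ≤ T * Real.log T := h7b
  -- Step B
  have hT0 : (0 : ℝ) < T := by linarith
  have hlogTp : Real.log (T + Real.log p) ≤ Real.log T + Real.log p / T :=
    log_add_le T (Real.log p) hT0 hlogp0.le
  have hdiv : (p - 1) * Real.log p / T ≤ Real.log T := by
    rw [div_le_iff₀ hT0]; nlinarith [hstepA]
  have hp1 : (0 : ℝ) ≤ p - 1 := by linarith
  calc (p - 1) * Real.log (T + Real.log p)
      ≤ (p - 1) * (Real.log T + Real.log p / T) :=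
        mul_le_mul_of_nonneg_left hlogTp hp1
    _ = (p - 1) * Real.log T + (p - 1) * Real.log p / T := by ring
    _ ≤ (p - 1) * Real.log T + Real.log T := by linarith
    _ = p * Real.log T := by ring

end Stmt6Aux

theorem stmt6
    (hCramer : ∃ D : ℝ, ∀ᶠ n : ℕ in Filter.atTop,
      (prim (n + 1) : ℝ) - prim n ≤ D * (Real.log (prim n)) ^ 2)
    (hLittlewood : ∃ C : ℝ, 0 < C ∧
      {n : ℕ | cheb (prim n) >
        (prim n : ℝ) + C * Real.sqrt (prim n) *
          Real.log (Real.log (Real.log (prim n)))}.Infinite) :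
    {n : ℕ | ¬ u n > u (n + 1)}.Infinite := by
  obtain ⟨D₀, hCr⟩ := hCramer
  obtain ⟨C, hC, hS⟩ := hLittlewood
  set D : ℝ := max D₀ 1 with hDdef
  have hD1 : (1 : ℝ) ≤ D := le_max_right _ _
  have hD0 : (0 : ℝ) < D := by linarith
  -- eventual conditions on a real variable
  have e1 : ∀ᶠ x : ℝ in atTop, (3 : ℝ) ≤ x := eventually_ge_atTop 3
  have e2 : ∀ᶠ x : ℝ in atTop, 1 ≤ Real.log (Real.log (Real.log x)) := by
    have t3 : Tendsto (fun x : ℝ => Real.log (Real.log (Real.log x))) atTop atTop :=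
      Real.tendsto_log_atTop.comp (Real.tendsto_log_atTop.comp Real.tendsto_log_atTop)
    exact t3.eventually_ge_atTop 1
  have e3 : ∀ᶠ x : ℝ in atTop, (Real.log x) ^ 2 ≤ C / (3 * D) * Real.sqrt x := by
    have hε : (0 : ℝ) < Real.sqrt (C / (3 * D)) := Real.sqrt_pos.2 (by positivity)
    have h := (isLittleO_log_rpow_atTop (show (0:ℝ) < 4⁻¹ by norm_num)).def hε
    filter_upwards [h, eventually_ge_atTop (1 : ℝ)] with x hx hx1
    have hx0 : (0 : ℝ) ≤ x := by linarith
    have hl0 : 0 ≤ Real.log x := Real.log_nonneg hx1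
    rw [Real.norm_eq_abs, Real.norm_eq_abs, abs_of_nonneg hl0,
      abs_of_nonneg (Real.rpow_nonneg hx0 _)] at hx
    have hsq : (x ^ ((4:ℝ)⁻¹)) ^ 2 = Real.sqrt x := by
      rw [← Real.rpow_natCast (x ^ ((4:ℝ)⁻¹)) 2, ← Real.rpow_mul hx0,
        Real.sqrt_eq_rpow]
      norm_num
    calc (Real.log x) ^ 2 ≤ (Real.sqrt (C / (3 * D)) * x ^ ((4:ℝ)⁻¹)) ^ 2 := by
          apply pow_le_pow_left₀ hl0 hx
      _ = C / (3 * D) * Real.sqrt x := by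
          rw [mul_pow, Real.sq_sqrt (by positivity), hsq]
  have e4 : ∀ᶠ x : ℝ in atTop, D * Real.log x ≤ x := by
    have h := Real.isLittleO_log_id_atTop.def (show (0:ℝ) < D⁻¹ by positivity)
    filter_upwards [h, eventually_ge_atTop (1 : ℝ)] with x hx hx1
    have hl0 : 0 ≤ Real.log x := Real.log_nonneg hx1
    rw [Real.norm_eq_abs, Real.norm_eq_abs, abs_of_nonneg hl0, id,
      abs_of_nonneg (by linarith : (0:ℝ) ≤ x)] at hx
    calc D * Real.log x ≤ D * (D⁻¹ * x) := by nlinarith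
      _ = x := by field_simp
  have E := e1.and (e2.and (e3.and e4))
  -- transfer along n ↦ prim n
  have hprim_tendsto : Tendsto (fun n : ℕ => ((prim n : ℕ) : ℝ)) atTop atTop := by
    have h1 : Tendsto (fun n : ℕ => n - 1) atTop atTop := tendsto_sub_atTop_nat 1
    have h2 : Tendsto (Nat.nth Nat.Prime) atTop atTop :=
      tendsto_atTop_mono (fun n => Stmt6Aux.q_strictMono.le_apply) tendsto_id
    exact tendsto_natCast_atTop_atTop.comp ((h2.comp h1) : Tendsto prim atTop atTop)
  have hEn : ∀ᶠ n : ℕ in atTop, (3 : ℝ) ≤ (prim n : ℝ) ∧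
      1 ≤ Real.log (Real.log (Real.log (prim n))) ∧
      (Real.log (prim n)) ^ 2 ≤ C / (3 * D) * Real.sqrt (prim n) ∧
      D * Real.log (prim n) ≤ (prim n : ℝ) :=
    hprim_tendsto.eventually E
  have hCr2 : ∀ᶠ n : ℕ in atTop,
      (prim (n + 1) : ℝ) - prim n ≤ D * (Real.log (prim n)) ^ 2 :=
    hCr.mono fun n h =>
      h.trans (mul_le_mul_of_nonneg_right (le_max_left _ _) (sq_nonneg _))
  obtain ⟨n₂, hn₂⟩ := (hCr2.and (hEn.and (eventually_ge_atTop 1))).exists_forall_of_atTop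
  apply Set.Infinite.mono _ ((hS.diff (Set.finite_Iio n₂)))
  rintro n ⟨hnS, hn'⟩
  have hn2 : n₂ ≤ n := not_lt.1 hn'
  obtain ⟨hcram, ⟨hx3, hlll, hlog2, hlog1⟩, hn1⟩ := hn₂ n hn2
  simp only [Set.mem_setOf_eq, not_lt]
  have hnS' : (prim n : ℝ) + C * Real.sqrt (prim n) *
      Real.log (Real.log (Real.log (prim n))) < Real.log (primorialN n : ℝ) := by
    have h := hnS
    rw [Set.mem_setOf_eq, Stmt6Aux.cheb_prim n hn1] at h
    exact h
  have hpnat : prim n < prim (n + 1) := by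
    obtain ⟨m, rfl⟩ : ∃ m, n = m + 1 := ⟨n - 1, by omega⟩
    rw [Stmt6Aux.prim_succ, Stmt6Aux.prim_succ]
    exact Stmt6Aux.q_strictMono (by omega)
  have hpx : (prim n : ℝ) + 1 ≤ (prim (n + 1) : ℝ) := by exact_mod_cast hpnat
  have hkey := Stmt6Aux.key (prim n) (prim (n + 1)) (Real.log (primorialN n : ℝ)) C D
    hC hD1 hx3 hlll hlog2 hlog1 hnS' hcram hpx
  -- identities for n+1
  have hq1 : (1 : ℕ) ≤ Stmt6Aux.q n := (Stmt6Aux.q_prime n).pos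
  have hNpos : (0 : ℝ) < ((primorialN n : ℕ) : ℝ) := by exact_mod_cast Stmt6Aux.primorial_pos n
  have hΦpos : (0 : ℝ) < (((primorialN n).totient : ℕ) : ℝ) := by
    exact_mod_cast Nat.totient_pos.2 (Stmt6Aux.primorial_pos n)
  have hcastp : ((Stmt6Aux.q n : ℕ) : ℝ) = (prim (n + 1) : ℝ) := by rw [Stmt6Aux.prim_succ]
  have hN1 : ((primorialN (n + 1) : ℕ) : ℝ)
      = (primorialN n : ℝ) * (prim (n + 1) : ℝ) := by
    rw [Stmt6Aux.primorial_succ]; push_cast; rw [hcastp]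
  have hΦ1 : (((primorialN (n + 1)).totient : ℕ) : ℝ)
      = ((primorialN n).totient : ℝ) * ((prim (n + 1) : ℝ) - 1) := by
    rw [Stmt6Aux.totient_succ, Nat.cast_mul, Nat.cast_sub hq1, Nat.cast_one, hcastp]
  have hlogN1 : Real.log ((primorialN (n + 1) : ℕ) : ℝ)
      = Real.log (primorialN n : ℝ) + Real.log (prim (n + 1) : ℝ) := by
    rw [Stmt6Aux.primorial_succ, Nat.cast_mul,
      Real.log_mul hNpos.ne' (by exact_mod_cast (Stmt6Aux.q_prime n).pos.ne'), hcastp]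
  -- positivity facts
  have hClllsx : 0 ≤ C * Real.sqrt (prim n) * Real.log (Real.log (Real.log (prim n))) :=
    mul_nonneg (mul_nonneg hC.le (Real.sqrt_nonneg _)) (by linarith)
  have hTx : (prim n : ℝ) < Real.log (primorialN n : ℝ) := by linarith
  have hlogT : (1 : ℝ) ≤ Real.log (Real.log (primorialN n : ℝ)) :=
    Stmt6Aux.one_le_log (by linarith)
  have hlogp0 : (0 : ℝ) < Real.log (prim (n + 1) : ℝ) := by
    have := Stmt6Aux.one_le_log (show (3:ℝ) ≤ (prim (n + 1) : ℝ) by linarith); linarith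
  have hlogTp : (0 : ℝ) < Real.log (Real.log (primorialN n : ℝ)
      + Real.log (prim (n + 1) : ℝ)) := by
    have := Stmt6Aux.one_le_log (show (3:ℝ) ≤ Real.log (primorialN n : ℝ)
      + Real.log (prim (n + 1) : ℝ) by linarith)
    linarith
  have hp1 : (1 : ℝ) < (prim (n + 1) : ℝ) := by linarith
  -- conclude
  unfold u
  rw [hlogN1, hN1, hΦ1]
  rw [div_le_div_iff₀ (mul_pos hΦpos (by linarith))
    (mul_pos (mul_pos hΦpos (by linarith)) hlogTp)]
  nlinarith [mul_le_mul_of_nonneg_left hkey (mul_pos hNpos hΦpos).le,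
    mul_pos hNpos hΦpos]
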